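/- Let W be a periodic infinite sequence over a finite alphabet, with period word u (i.e., W = uuu...). Then the set of obstructions of W is finite; in fact every obstruction of W has length at most 2|u|+1. -/
import Mathlib


/-- The factor of the infinite word `W` of length `n` starting at position `i`. -/
def factorAt {α : Type*} (W : ℕ → α) (i n : ℕ) : List α :=
  (List.range n).map (fun j => W (i + j))

/-- `v` is a (contiguous) factor of the infinite word `W`. -/
def IsFactor {α : Type*} (W : ℕ → α) (v : List α) : Prop :=
  ∃ i, factorAt W i v.length = v

/-- `v` is an obstruction for `W`: not a factor, but all proper factors of `v` are factors. -/
def IsObstructionW {α : Type*} (W : ℕ → α) (v : List α) : Prop :=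
  ¬ IsFactor W v ∧ ∀ u : List α, u <:+: v → u ≠ v → IsFactor W u

/-- Cogrowth: the number of obstructions of length at most `n`. -/
noncomputable def cogrowth {α : Type*} (W : ℕ → α) (n : ℕ) : ℕ :=
  {v : List α | IsObstructionW W v ∧ v.length ≤ n}.ncard

def UniformlyRecurrent {α : Type*} (W : ℕ → α) : Prop :=
  ∀ u : List α, IsFactor W u → ∃ C, ∀ v : List α, IsFactor W v → v.length = C → u <:+: v

def EventuallyPeriodic {α : Type*} (W : ℕ → α) : Prop :=
  ∃ p, 0 < p ∧ ∃ N, ∀ i, N ≤ i → W (i + p) = W i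

/-- Fibonacci finite words: u₀ = b = ff, u₁ = a = tt, u_{k+2} = u_{k+1} ++ u_k. -/
def fibWordAux : ℕ → List Bool
  | 0 => [false]
  | 1 => [true]
  | (k+2) => fibWordAux (k+1) ++ fibWordAux k

/-- The infinite Fibonacci word, limit of the `fibWordAux` (letter `a` = `true`, `b` = `false`). -/
def fibWord (n : ℕ) : Bool := (fibWordAux (n+2)).getD n false


section Aux
variable {α : Type*}

lemma factorAt_length' (W : ℕ → α) (i n : ℕ) : (factorAt W i n).length = n := by
  simp [factorAt]

lemma factorAt_getD (W : ℕ → α) (i n k : ℕ) (hk : k < n) (d : α) :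
    (factorAt W i n).getD k d = W (i + k) := by
  rw [List.getD_eq_getElem _ _ (by simpa [factorAt_length'] using hk)]
  simp [factorAt]

lemma period_extend (W : ℕ → α) (p : ℕ) (hp : 0 < p) (hper : ∀ m, W (m + p) = W m)
    (a b n : ℕ) (hn : p ≤ n) (h : ∀ k < n, W (a + k) = W (b + k)) :
    ∀ k, W (a + k) = W (b + k) := by
  intro k
  induction k using Nat.strong_induction_on with
  | _ k ih =>
    by_cases hk : k < n
    · exact h k hk
    · push_neg at hk
      have hkp : p ≤ k := le_trans hn hk
      have e1 : a + k = a + (k - p) + p := by omega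
      have e2 : b + k = b + (k - p) + p := by omega
      rw [e1, e2, hper, hper]
      exact ih (k - p) (by omega)

lemma obstruction_length_le (W : ℕ → α) [Inhabited α] (p : ℕ) (hp : 0 < p)
    (hper : ∀ m, W (m + p) = W m) (v : List α) (hv : IsObstructionW W v) :
    v.length ≤ p + 1 := by
  obtain ⟨hnf, hfac⟩ := hv
  by_contra h
  push_neg at h
  set n := v.length with hn
  have hn2 : p + 2 ≤ n := h
  -- prefix occurrence
  have hpre : IsFactor W (v.take (n - 1)) := by
    refine hfac _ (List.IsPrefix.isInfix (List.take_prefix _ _)) ?_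
    intro e
    have := congrArg List.length e
    simp at this
    omega
  have hsuf : IsFactor W (v.drop 1) := by
    refine hfac _ (List.IsSuffix.isInfix (List.drop_suffix _ _)) ?_
    intro e
    have := congrArg List.length e
    simp at this
    omega
  obtain ⟨i, hi⟩ := hpre
  obtain ⟨j, hj⟩ := hsuf
  rw [List.length_take] at hi
  rw [List.length_drop] at hj
  have hmin : min (n - 1) n = n - 1 := by omega
  rw [hmin] at hi
  have hA : ∀ k < n - 1, W (i + k) = v.getD k default := by
    intro k hk
    have := factorAt_getD W i (n - 1) k hk default
    rw [hi] at this
    rw [← this, List.getD_eq_getElem _ _ (by simp; omega),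
      List.getD_eq_getElem _ _ (by omega)]
    simp [List.getElem_take]
  have hB : ∀ k < n - 1, W (j + k) = v.getD (1 + k) default := by
    intro k hk
    have := factorAt_getD W j (n - 1) k hk default
    rw [hj] at this
    rw [← this, List.getD_eq_getElem _ _ (by simp; omega),
      List.getD_eq_getElem _ _ (by omega)]
    simp [List.getElem_drop]
    congr 1
    omega
  have hmid : ∀ k < n - 2, W (i + 1 + k) = W (j + k) := by
    intro k hk
    have h1 := hA (1 + k) (by omega)
    have h2 := hB k (by omega)
    rw [h2, ← h1]
    congr 1
    omega
  have hall := period_extend W p hp hper (i + 1) j (n - 2) (by omega) hmid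
  have hlast : W (i + (n - 1)) = v.getD (n - 1) default := by
    have := hall (n - 2)
    have e : i + 1 + (n - 2) = i + (n - 1) := by omega
    rw [e] at this
    rw [this, hB (n - 2) (by omega)]
    congr 1
    omega
  apply hnf
  refine ⟨i, ?_⟩
  apply List.ext_getElem (by simp [factorAt])
  intro k h1 h2
  rw [← List.getD_eq_getElem _ default, ← List.getD_eq_getElem _ default,
    factorAt_getD W i n k (by omega) default]
  by_cases hk : k < n - 1
  · exact hA k hk
  · have : k = n - 1 := by simp [factorAt_length'] at h1; omega
    rw [this, hlast]

end Aux

theorem periodic_obstructions_finite {α : Type*} [Fintype α] [Inhabited α]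
    (u : List α) (hu : u ≠ []) :
    {v : List α | IsObstructionW (fun i => u.getD (i % u.length) default) v}.Finite ∧
    ∀ v : List α, IsObstructionW (fun i => u.getD (i % u.length) default) v →
      v.length ≤ 2 * u.length + 1 := by
  have hp : 0 < u.length := List.length_pos_iff.mpr hu
  set W : ℕ → α := fun i => u.getD (i % u.length) default with hW
  have hper : ∀ m, W (m + u.length) = W m := by
    intro m
    simp only [hW, Nat.add_mod_right]
  have hlen : ∀ v, IsObstructionW W v → v.length ≤ u.length + 1 :=
    fun v hv => obstruction_length_le W u.length hp hper v hv
  constructor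
  · apply Set.Finite.subset (List.finite_length_le α (u.length + 1))
    intro v hv
    exact hlen v hv
  · intro v hv
    have := hlen v hv
    omega
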